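/- Let F be a free group and W ⊆ F any subset. Define 𝓕(W) to be the set of nonempty reduced words in F no exact subword of which (i.e., no nonempty subword composed of whole syllables) belongs to W. Then every nonempty word w ∈ F admits a decomposition w = w₁⋯wₙ into exact subwords such that each wᵢ belongs to W ∪ 𝓕(W) and no two consecutive subwords wᵢ, wᵢ₊₁ both belong to 𝓕(W). -/

import Mathlib

/-- A word in the free group on `S`, presented as its list of syllables `(sᵢ, nᵢ)`
(standing for `sᵢ^{nᵢ}`), is reduced if consecutive syllables use distinct generators and
all exponents are nonzero. -/
def IsReducedWord {S : Type*} (w : List (S × ℤ)) : Prop :=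
  w.Chain' (fun p q => p.1 ≠ q.1) ∧ ∀ p ∈ w, p.2 ≠ 0

/-- `𝓕(W)`: the set of nonempty words none of whose exact subwords (nonempty contiguous
blocks of syllables) belongs to `W`. -/
def avoids {S : Type*} (W : Set (List (S × ℤ))) : Set (List (S × ℤ)) :=
  {u | u ≠ [] ∧ ∀ v : List (S × ℤ), v ≠ [] → v <:+: u → v ∉ W}

private lemma aux_key {S : Type*} (W : Set (List (S × ℤ))) :
    ∀ n (w : List (S × ℤ)), w.length ≤ n →
    ∃ ws : List (List (S × ℤ)), ws.flatten = w ∧ (∀ u ∈ ws, u ≠ []) ∧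
      (∀ u ∈ ws, u ∈ W ∪ avoids W) ∧
      ws.Chain' (fun u v => ¬(u ∈ avoids W ∧ v ∈ avoids W)) := by
  intro n
  induction n with
  | zero =>
    intro w hw
    have : w = [] := List.eq_nil_of_length_eq_zero (Nat.le_zero.mp hw)
    subst this
    exact ⟨[], rfl, by simp, by simp, List.isChain_nil⟩
  | succ n ih =>
    intro w hw
    rcases eq_or_ne w [] with rfl | hne
    · exact ⟨[], rfl, by simp, by simp, List.isChain_nil⟩
    by_cases hav : w ∈ avoids W
    · exact ⟨[w], by simp, by simpa using hne, by simp [hav], List.isChain_singleton _⟩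
    · have hex : ∃ v : List (S × ℤ), v ≠ [] ∧ v <:+: w ∧ v ∈ W := by
        by_contra h
        push_neg at h
        exact hav ⟨hne, fun v hv hinf => h v hv hinf⟩
      obtain ⟨v₀, hv₀, hinf₀, hW₀⟩ := hex
      obtain ⟨a₀, b₀, heq₀⟩ := hinf₀
      set T : Set ℕ := {m | ∃ a v b : List (S × ℤ),
        v ≠ [] ∧ v ∈ W ∧ a ++ v ++ b = w ∧ a.length + v.length = m} with hTdef
      have hT : T.Nonempty := ⟨_, a₀, v₀, b₀, hv₀, hW₀, heq₀, rfl⟩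
      obtain ⟨a, v, b, hv, hvW, heq, hm⟩ := Nat.sInf_mem hT
      have ha : ∀ u : List (S × ℤ), u ≠ [] → u <:+: a → u ∉ W := by
        rintro u hu ⟨a₁, a₂, ha'⟩ huW
        have hkT : a₁.length + u.length ∈ T := by
          refine ⟨a₁, u, a₂ ++ v ++ b, hu, huW, ?_, rfl⟩
          rw [← heq, ← ha']; simp [List.append_assoc]
        have h1 := Nat.sInf_le hkT
        have h2 : a₁.length + u.length < sInf T := by
          have hlen : a.length = a₁.length + u.length + a₂.length := by
            rw [← ha']; simp; omega
          have hv1 : 1 ≤ v.length := List.length_pos_iff.mpr hv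
          omega
        omega
      have hvnot : v ∉ avoids W := fun h => h.2 v hv (List.infix_refl v) hvW
      have hb : b.length ≤ n := by
        have := congrArg List.length heq
        simp at this
        have hv1 : 1 ≤ v.length := List.length_pos_iff.mpr hv
        omega
      obtain ⟨ws, hflat, hne', hmem, hchain⟩ := ih b hb
      rcases eq_or_ne a [] with rfl | hane
      · refine ⟨v :: ws, ?_, ?_, ?_, ?_⟩
        · simp only [List.flatten_cons, hflat]; simpa using heq
        · intro u hu
          rcases List.mem_cons.mp hu with rfl | hu
          · exact hv
          · exact hne' u hu
        · intro u hu
          rcases List.mem_cons.mp hu with rfl | hu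
          · exact Or.inl hvW
          · exact hmem u hu
        · rw [List.Chain', List.isChain_cons]
          exact ⟨fun y _ h => hvnot h.1, hchain⟩
      · have haav : a ∈ avoids W := ⟨hane, ha⟩
        refine ⟨a :: v :: ws, ?_, ?_, ?_, ?_⟩
        · simp only [List.flatten_cons, hflat, ← List.append_assoc]; exact heq
        · intro u hu
          rcases List.mem_cons.mp hu with rfl | hu
          · exact hane
          rcases List.mem_cons.mp hu with rfl | hu
          · exact hv
          · exact hne' u hu
        · intro u hu
          rcases List.mem_cons.mp hu with rfl | hu
          · exact Or.inr haav
          rcases List.mem_cons.mp hu with rfl | hu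
          · exact Or.inl hvW
          · exact hmem u hu
        · rw [List.Chain', List.isChain_cons]
          refine ⟨fun y hy h => ?_, ?_⟩
          · simp at hy; subst hy; exact hvnot h.2
          · rw [List.isChain_cons]
            exact ⟨fun y _ h => hvnot h.1, hchain⟩

/-- Let `F` be the free group on a finite set `S` with `|S| ≥ 2` and
`W ⊆ F` any subset. Then every nonempty (reduced) word `w ∈ F` admits a decomposition
`w = w₁⋯wₙ` into exact subwords such that each `wᵢ` belongs to `W ∪ 𝓕(W)` and no two
consecutive subwords both belong to `𝓕(W)`. -/
theorem stmt_0 {S : Type*} [Fintype S] [DecidableEq S] (hS : 2 ≤ Fintype.card S)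
    (W : Set (List (S × ℤ))) (w : List (S × ℤ)) (hw : w ≠ []) (hred : IsReducedWord w) :
    ∃ ws : List (List (S × ℤ)), ws.flatten = w ∧ (∀ u ∈ ws, u ≠ []) ∧
      (∀ u ∈ ws, u ∈ W ∪ avoids W) ∧
      ws.Chain' (fun u v => ¬(u ∈ avoids W ∧ v ∈ avoids W)) := by
  exact aux_key W w.length w le_rfl
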